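/- If g is a finite-dimensional perfect Lie algebra of dimension n (i.e. [g,g] = g), then there exist elements Y_1,…,Y_n ∈ g and linear maps σ_1,…,σ_n : g → g such that [σ_1(X),Y_1] + ⋯ + [σ_n(X),Y_n] = X for all X ∈ g; that is, N_g ≤ dim g. -/

import Mathlib

/-- If `g` is a finite-dimensional perfect Lie algebra (`[g,g] = g`) of dimension `n`, then
there exist `Y₁,…,Yₙ ∈ g` and linear maps `σ₁,…,σₙ : g → g` with
`⁅σ₁ X, Y₁⁆ + ⋯ + ⁅σₙ X, Yₙ⁆ = X` for all `X`; that is, `N_g ≤ dim g`. -/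
theorem stmt_2 (k : Type*) [Field k] (g : Type*) [LieRing g] [LieAlgebra k g]
    [Module.Finite k g]
    (hperf : Submodule.span k {x : g | ∃ a b : g, x = ⁅a, b⁆} = ⊤)
    (n : ℕ) (hn : n = Module.finrank k g) :
    ∃ (Y : Fin n → g) (σ : Fin n → (g →ₗ[k] g)),
      ∀ X : g, ∑ i, ⁅σ i X, Y i⁆ = X := by
  classical
  obtain ⟨s, hsub, hspan, hli⟩ :=
    exists_linearIndependent k ({x : g | ∃ a b : g, x = ⁅a, b⁆})
  have hspan' : Submodule.span k s = ⊤ := by rw [hspan, hperf]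
  let b : Module.Basis s k g := Module.Basis.mk hli (by rw [Subtype.range_coe, hspan'])
  haveI : Fintype s := FiniteDimensional.fintypeBasisIndex b
  have hcard : Fintype.card (Fin n) = Fintype.card s := by
    rw [Fintype.card_fin, hn, Module.finrank_eq_card_basis b]
  let e : Fin n ≃ s := Fintype.equivOfCardEq hcard
  let b' : Module.Basis (Fin n) k g := b.reindex e.symm
  have hb'coe : ∀ i, b' i = (e i : g) := fun i => by
    simp [b', b, Module.Basis.reindex_apply, Module.Basis.mk_apply]
  have hb' : ∀ i, ∃ a c : g, b' i = ⁅a, c⁆ := fun i => (hb'coe i) ▸ hsub (e i).2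
  choose a c hac using hb'
  refine ⟨c, fun i => (b'.coord i).smulRight (a i), fun X => ?_⟩
  have : ∀ i, ⁅(b'.coord i).smulRight (a i) X, c i⁆ = b'.repr X i • b' i := by
    intro i
    simp [LinearMap.smulRight_apply, Module.Basis.coord_apply, smul_lie, hac i]
  rw [Finset.sum_congr rfl fun i _ => this i]
  exact b'.sum_repr X
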